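/- arXiv:2411.19854 — 3 statements merged into one kernel-verified Lean document; each statement's English description precedes it below -/
import Mathlib

section
/- For the SSS model with α ≥ 2, the unconstrained objective Δ*(ρ) = C₀ · ((ρ^α+ρ)/(1+ρ))^{1/α} · (2 + 1/ρ + 1/(ρ(1+ρ))) attains a critical point at ρ = 1, where its derivative vanishes. -/
/-- For the SSS model with α ≥ 2, the unconstrained objective has a critical
point at ρ = 1: its derivative vanishes there. -/
theorem sss_critical_at_one (C₀ α : ℝ) (hC₀ : 0 < C₀) (hα : 2 ≤ α) :
    deriv (fun ρ : ℝ =>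
        C₀ * ((ρ ^ α + ρ) / (1 + ρ)) ^ (1/α) * (2 + 1/ρ + 1/(ρ * (1 + ρ)))) 1 = 0 := by
  have hα0 : α ≠ 0 := by linarith
  -- numerator ρ^α + ρ
  have hN : HasDerivAt (fun ρ : ℝ => ρ ^ α + ρ) (α + 1) 1 := by
    have h1 : HasDerivAt (fun ρ : ℝ => ρ ^ α) (α * (1:ℝ) ^ (α - 1)) 1 :=
      Real.hasDerivAt_rpow_const (Or.inl one_ne_zero)
    have h := h1.add (hasDerivAt_id' 1)
    rw [Real.one_rpow, mul_one] at h
    exact h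
  -- denominator 1 + ρ
  have hD : HasDerivAt (fun ρ : ℝ => 1 + ρ) 1 1 := by
    simpa using (hasDerivAt_id (1:ℝ)).const_add 1
  have hden : (1:ℝ) + 1 ≠ 0 := by norm_num
  have hu : HasDerivAt (fun ρ : ℝ => (ρ ^ α + ρ) / (1 + ρ))
      (((α + 1) * (1 + 1) - ((1:ℝ) ^ α + 1) * 1) / ((1 + 1) ^ 2)) 1 := hN.div hD hden
  have hu' : HasDerivAt (fun ρ : ℝ => (ρ ^ α + ρ) / (1 + ρ)) (α / 2) 1 := by
    convert hu using 1
    rw [Real.one_rpow]; ring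
  have hu1 : (fun ρ : ℝ => (ρ ^ α + ρ) / (1 + ρ)) 1 = 1 := by
    simp [Real.one_rpow]
  -- the rpow part
  have hA : HasDerivAt (fun ρ : ℝ => ((ρ ^ α + ρ) / (1 + ρ)) ^ (1/α)) (1/2) 1 := by
    have := hu'.rpow_const (p := 1/α) (Or.inl (by norm_num [Real.one_rpow]))
    convert this using 1
    rw [Real.one_rpow]
    field_simp
    rw [Real.one_rpow]
  -- the h part
  have hinv1 : HasDerivAt (fun ρ : ℝ => 1/ρ) (-1) 1 := by
    simpa using (hasDerivAt_inv (one_ne_zero)).congr_deriv (by norm_num)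
  have hprod : HasDerivAt (fun ρ : ℝ => ρ * (1 + ρ)) 3 1 := by
    have := (hasDerivAt_id (1:ℝ)).mul hD
    exact this.congr_deriv (by norm_num)
  have hinv2 : HasDerivAt (fun ρ : ℝ => 1/(ρ * (1 + ρ))) (-(3/4)) 1 := by
    have h2 : (fun ρ : ℝ => 1/(ρ * (1 + ρ))) = fun ρ : ℝ => (ρ * (1 + ρ))⁻¹ := by
      funext ρ; rw [one_div]
    rw [h2]
    have := hprod.inv (by norm_num)
    exact this.congr_deriv (by norm_num)
  have hB : HasDerivAt (fun ρ : ℝ => 2 + 1/ρ + 1/(ρ * (1 + ρ))) (-(7/4)) 1 := by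
    have := (hinv1.const_add 2).add hinv2
    exact this.congr_deriv (by norm_num)
  have hfull : HasDerivAt (fun ρ : ℝ =>
      C₀ * ((ρ ^ α + ρ) / (1 + ρ)) ^ (1/α) * (2 + 1/ρ + 1/(ρ * (1 + ρ))))
      (C₀ * (1/2) * (2 + 1/1 + 1/(1 * (1 + 1))) +
        C₀ * (((1:ℝ) ^ α + 1) / (1 + 1)) ^ (1/α) * (-(7/4))) 1 :=
    (hA.const_mul C₀).mul hB
  rw [hfull.deriv]
  rw [Real.one_rpow]
  norm_num
  ring
end

section
/- For the P-SIU model with any α ≥ 2, the unconstrained objective Δ*(ρ) = C₀ · (2(ρ^α+ρ)/(1+ρ))^{1/α} · (1 + (1/(2ρ))(1 + 1/(1+ρ))) has a critical point at ρ = 1. -/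
/-- For the P-SIU model with α ≥ 2, the unconstrained objective has a
critical point at ρ = 1. -/
theorem psiu_critical_at_one (C₀ α : ℝ) (hC₀ : 0 < C₀) (hα : 2 ≤ α) :
    deriv (fun ρ : ℝ =>
        C₀ * (2 * (ρ ^ α + ρ) / (1 + ρ)) ^ (1/α)
          * (1 + (1 / (2*ρ)) * (1 + 1/(1 + ρ)))) 1 = 0 := by
  have hα0 : α ≠ 0 := by nlinarith
  -- numerator of g
  have hn : HasDerivAt (fun ρ : ℝ => 2 * (ρ ^ α + ρ)) (2 * (α * (1:ℝ) ^ (α - 1) + 1)) 1 := by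
    exact ((Real.hasDerivAt_rpow_const (Or.inl one_ne_zero)).add (hasDerivAt_id 1)).const_mul 2
  have hd : HasDerivAt (fun ρ : ℝ => 1 + ρ) 1 1 := by
    simpa using (hasDerivAt_id (1:ℝ)).const_add 1
  have hd1 : (1:ℝ) + 1 ≠ 0 := by norm_num
  have hg : HasDerivAt (fun ρ : ℝ => 2 * (ρ ^ α + ρ) / (1 + ρ))
      ((2 * (α * (1:ℝ) ^ (α - 1) + 1) * (1 + 1) - 2 * ((1:ℝ) ^ α + 1) * 1) / ((1 + 1) ^ 2)) 1 :=
    hn.div hd hd1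
  have hg1 : (2 * ((1:ℝ) ^ α + 1) / (1 + 1)) ≠ 0 := by
    rw [Real.one_rpow]; norm_num
  have hv : HasDerivAt (fun ρ : ℝ => (2 * (ρ ^ α + ρ) / (1 + ρ)) ^ (1/α))
      (((2 * (α * (1:ℝ) ^ (α - 1) + 1) * (1 + 1) - 2 * ((1:ℝ) ^ α + 1) * 1) / ((1 + 1) ^ 2))
        * (1/α) * (2 * ((1:ℝ) ^ α + 1) / (1 + 1)) ^ (1/α - 1)) 1 :=
    hg.rpow_const (Or.inl hg1)
  -- h part
  have h2ρ : HasDerivAt (fun ρ : ℝ => 2 * ρ) 2 1 := by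
    simpa using (hasDerivAt_id (1:ℝ)).const_mul 2
  have ha : HasDerivAt (fun ρ : ℝ => 1 / (2 * ρ)) ((0 * (2*1) - 1 * 2) / (2*1)^2) 1 :=
    (hasDerivAt_const 1 1).div h2ρ (by norm_num)
  have hb : HasDerivAt (fun ρ : ℝ => 1 + 1 / (1 + ρ)) ((0 * (1+1) - 1 * 1) / (1+1)^2) 1 := by
    simpa using ((hasDerivAt_const 1 1).div hd hd1).const_add 1
  have hh : HasDerivAt (fun ρ : ℝ => 1 + (1 / (2*ρ)) * (1 + 1/(1 + ρ)))
      (((0 * (2*1) - 1 * 2) / (2*1)^2) * (1 + 1/(1+1))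
        + (1/(2*1)) * ((0 * (1+1) - 1 * 1) / (1+1)^2)) 1 := by
    simpa using (ha.mul hb).const_add 1
  have hf := (hv.const_mul C₀).mul hh
  rw [show deriv (fun ρ : ℝ =>
        C₀ * (2 * (ρ ^ α + ρ) / (1 + ρ)) ^ (1/α)
          * (1 + (1 / (2*ρ)) * (1 + 1/(1 + ρ)))) 1 = _ from hf.deriv]
  have e1 : (1:ℝ) ^ α = 1 := Real.one_rpow α
  have e2 : (1:ℝ) ^ (α - 1) = 1 := Real.one_rpow _
  rw [e1, e2]
  have h2 : (2 * ((1:ℝ)+1) / (1+1)) = 2 := by norm_num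
  norm_num
  have hsub : (2:ℝ) ^ (α⁻¹ - 1) = 2 ^ α⁻¹ / 2 := by
    rw [Real.rpow_sub (by norm_num : (0:ℝ) < 2), Real.rpow_one]
  rw [hsub]
  field_simp
  ring
end

section
/- For all μ₂ > 0 and ρ > 0, the M/M/1/2* age (1/μ₂)[2/ρ + 2ρ²/(1+ρ+ρ²) + (1+2ρ)(1+3ρ+ρ²)/(1+ρ)⁴] is strictly greater than the M/M/1* age (1/μ₂)(1 + 1/ρ). -/
/-- The M/M/1/2* age strictly exceeds the M/M/1* age. -/
theorem mm12star_age_gt_mm1star (μ₂ ρ : ℝ) (hμ₂ : 0 < μ₂) (hρ : 0 < ρ) :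
    (1 / μ₂) * (2/ρ + 2*ρ^2/(1 + ρ + ρ^2)
        + (1 + 2*ρ) * (1 + 3*ρ + ρ^2) / (1 + ρ)^4)
      > (1 / μ₂) * (1 + 1/ρ) := by
  have h1 : (0:ℝ) < 1 + ρ + ρ^2 := by positivity
  have h2 : (0:ℝ) < (1 + ρ)^4 := by positivity
  apply mul_lt_mul_of_pos_left _ (by positivity : (0:ℝ) < 1/μ₂)
  rw [div_add_div _ _ (ne_of_gt hρ) (ne_of_gt h1), div_add_div _ _ (by positivity) (ne_of_gt h2),
    ← sub_pos, one_add_div (ne_of_gt hρ), div_sub_div _ _ (by positivity) (ne_of_gt hρ)]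
  apply div_pos _ (by positivity)
  nlinarith [pow_pos hρ 2, pow_pos hρ 3, pow_pos hρ 4, pow_pos hρ 5, pow_pos hρ 6, pow_pos hρ 7]
end
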